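/- Let L₁ = (L_{1,1} ≤ ⋯ ≤ L_{1,N₁}) and L₂ = (L_{2,1} ≤ ⋯ ≤ L_{2,N₂}) be two lists of positive reals, let κ₁ ∈ {1,…,N₁}, κ₂ ∈ {1,…,N₂}, K > 0 and r > 0. Then there exist K₁*, K₂* ≥ 0 with K₁* + K₂* ≤ K such that W(κ₁,κ₂,K,L₁,L₂,r) = V(κ₁,K₁*,L₁) = r · V(κ₂,K₂*,L₂), and for every pair (K₁,K₂) of nonnegative reals with K₁ + K₂ ≤ K and V(κ₁,K₁,L₁) = r · V(κ₂,K₂,L₂) one has V(κ₁,K₁,L₁) ≤ W(κ₁,κ₂,K,L₁,L₂,r). In other words, the max–min value W equals the value of the constrained maximization of V(κ₁,K₁,L₁) over pairs (K₁,K₂) with K₁+K₂ ≤ K and V(κ₁,K₁,L₁) = r·V(κ₂,K₂,L₂). -/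

import Mathlib

open Finset

/-- The inner minimum `𝒱(c; κ, L)`: the minimum over subsets `U ⊆ {1,…,N}` with `|U| = κ`
of `∑_{i ∈ U} c_i L_i`. -/
noncomputable def Vmin (N κ : ℕ) (L c : ℕ → ℝ) : ℝ :=
  sInf {x : ℝ | ∃ U : Finset ℕ, U ⊆ Finset.Icc 1 N ∧ U.card = κ ∧ x = ∑ i ∈ U, c i * L i}

/-- Membership in the constraint set `D_N(K) = {c ∈ [0,1]^N : ∑_{i=1}^N c_i ≤ K}`. -/
def Dmem (N : ℕ) (K : ℝ) (c : ℕ → ℝ) : Prop :=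
  (∀ i ∈ Finset.Icc 1 N, 0 ≤ c i ∧ c i ≤ 1) ∧ (∑ i ∈ Finset.Icc 1 N, c i) ≤ K

/-- The max–min value `V(κ, K, L) = sup_{c ∈ D_N(K)} 𝒱(c; κ, L)`. -/
noncomputable def Vval (N κ : ℕ) (K : ℝ) (L : ℕ → ℝ) : ℝ :=
  sSup {v : ℝ | ∃ c : ℕ → ℝ, Dmem N K c ∧ v = Vmin N κ L c}

/-- The max–min value `W(κ₁,κ₂,K,L₁,L₂,r)` of Optimization Problem II. -/
noncomputable def Wval (N₁ N₂ κ₁ κ₂ : ℕ) (K r : ℝ) (L₁ L₂ : ℕ → ℝ) : ℝ :=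
  sSup {w : ℝ | ∃ c₁ c₂ : ℕ → ℝ,
    (∀ i ∈ Finset.Icc 1 N₁, 0 ≤ c₁ i ∧ c₁ i ≤ 1) ∧
    (∀ j ∈ Finset.Icc 1 N₂, 0 ≤ c₂ j ∧ c₂ j ≤ 1) ∧
    (∑ i ∈ Finset.Icc 1 N₁, c₁ i) + (∑ j ∈ Finset.Icc 1 N₂, c₂ j) ≤ K ∧
    w = min (Vmin N₁ κ₁ L₁ c₁) (r * Vmin N₂ κ₂ L₂ c₂)}

lemma vmin_finite (N κ : ℕ) (L c : ℕ → ℝ) :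
    {x : ℝ | ∃ U : Finset ℕ, U ⊆ Finset.Icc 1 N ∧ U.card = κ ∧ x = ∑ i ∈ U, c i * L i}.Finite := by
  apply Set.Finite.subset (Finset.finite_toSet
    (((Finset.Icc 1 N).powersetCard κ).image (fun U => ∑ i ∈ U, c i * L i)))
  rintro x ⟨U, hU, hcard, rfl⟩
  simp only [Finset.coe_image, Set.mem_image, Finset.mem_coe, Finset.mem_powersetCard]
  exact ⟨U, ⟨hU, hcard⟩, rfl⟩

lemma vmin_mem {N κ : ℕ} (hκN : κ ≤ N) (L c : ℕ → ℝ) :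
    ∃ U : Finset ℕ, U ⊆ Finset.Icc 1 N ∧ U.card = κ ∧ Vmin N κ L c = ∑ i ∈ U, c i * L i := by
  obtain ⟨U, hU, hcard⟩ := Finset.exists_subset_card_eq (s := Finset.Icc 1 N) (n := κ)
    (by simp [Nat.card_Icc, hκN])
  have hne : Set.Nonempty {x : ℝ | ∃ U : Finset ℕ, U ⊆ Finset.Icc 1 N ∧ U.card = κ ∧
      x = ∑ i ∈ U, c i * L i} := ⟨_, U, hU, hcard, rfl⟩
  exact hne.csInf_mem (vmin_finite N κ L c)

lemma vmin_le {N κ : ℕ} (L c : ℕ → ℝ) {U : Finset ℕ} (hU : U ⊆ Finset.Icc 1 N)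
    (hcard : U.card = κ) : Vmin N κ L c ≤ ∑ i ∈ U, c i * L i :=
  csInf_le (vmin_finite N κ L c).bddBelow ⟨U, hU, hcard, rfl⟩

lemma vmin_nonneg {N κ : ℕ} (hκN : κ ≤ N) {L c : ℕ → ℝ}
    (hL : ∀ i ∈ Finset.Icc 1 N, 0 ≤ L i) (hc : ∀ i ∈ Finset.Icc 1 N, 0 ≤ c i) :
    0 ≤ Vmin N κ L c := by
  obtain ⟨U, hU, hcard, heq⟩ := vmin_mem hκN L c
  rw [heq]
  exact Finset.sum_nonneg fun i hi => mul_nonneg (hc i (hU hi)) (hL i (hU hi))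

lemma vmin_zero {N κ : ℕ} (hκN : κ ≤ N) (L : ℕ → ℝ) : Vmin N κ L (fun _ => 0) = 0 := by
  obtain ⟨U, hU, hcard, heq⟩ := vmin_mem hκN L (fun _ => 0)
  simp [heq]

lemma vmin_smul {N κ : ℕ} (hκN : κ ≤ N) (L c : ℕ → ℝ) {a : ℝ} (ha : 0 ≤ a) :
    Vmin N κ L (fun i => a * c i) = a * Vmin N κ L c := by
  apply le_antisymm
  · obtain ⟨U, hU, hcard, heq⟩ := vmin_mem hκN L c
    calc Vmin N κ L (fun i => a * c i) ≤ ∑ i ∈ U, (a * c i) * L i := vmin_le _ _ hU hcard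
    _ = a * ∑ i ∈ U, c i * L i := by rw [Finset.mul_sum]; apply Finset.sum_congr rfl; intros; ring
    _ = a * Vmin N κ L c := by rw [heq]
  · obtain ⟨U, hU, hcard, heq⟩ := vmin_mem hκN L (fun i => a * c i)
    have h2 : Vmin N κ L c ≤ ∑ i ∈ U, c i * L i := vmin_le _ _ hU hcard
    calc a * Vmin N κ L c ≤ a * ∑ i ∈ U, c i * L i := mul_le_mul_of_nonneg_left h2 ha
    _ = ∑ i ∈ U, (a * c i) * L i := by rw [Finset.mul_sum]; apply Finset.sum_congr rfl; intros; ring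
    _ = Vmin N κ L (fun i => a * c i) := heq.symm

lemma vmin_le_bound {N κ : ℕ} {L : ℕ → ℝ} (hLmono : ∀ i j : ℕ, 1 ≤ i → i ≤ j → j ≤ N → L i ≤ L j)
    (hLN : 0 ≤ L N) (hκN : κ ≤ N) {K : ℝ} {c : ℕ → ℝ} (hc : Dmem N K c) :
    Vmin N κ L c ≤ L N * K := by
  have hU : Finset.Icc 1 κ ⊆ Finset.Icc 1 N := Finset.Icc_subset_Icc_right hκN
  have h1 : Vmin N κ L c ≤ ∑ i ∈ Finset.Icc 1 κ, c i * L i :=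
    vmin_le _ _ hU (by simp [Nat.card_Icc])
  have h2 : ∑ i ∈ Finset.Icc 1 κ, c i * L i ≤ ∑ i ∈ Finset.Icc 1 κ, c i * L N := by
    apply Finset.sum_le_sum
    intro i hi
    rw [Finset.mem_Icc] at hi
    exact mul_le_mul_of_nonneg_left (hLmono i N hi.1 (hi.2.trans hκN) le_rfl)
      (hc.1 i (hU (Finset.mem_Icc.mpr hi))).1
  have h3 : ∑ i ∈ Finset.Icc 1 κ, c i ≤ ∑ i ∈ Finset.Icc 1 N, c i :=
    Finset.sum_le_sum_of_subset_of_nonneg hU (fun i hi _ => (hc.1 i hi).1)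
  calc Vmin N κ L c ≤ ∑ i ∈ Finset.Icc 1 κ, c i * L N := h1.trans h2
  _ = (∑ i ∈ Finset.Icc 1 κ, c i) * L N := by rw [Finset.sum_mul]
  _ ≤ K * L N := mul_le_mul_of_nonneg_right (h3.trans hc.2) hLN
  _ = L N * K := mul_comm _ _


lemma dmem_zero {N : ℕ} {K : ℝ} (hK : 0 ≤ K) : Dmem N K (fun _ => 0) :=
  ⟨fun i _ => by norm_num, by simpa using hK⟩

lemma zero_mem_vset {N κ : ℕ} (hκN : κ ≤ N) {K : ℝ} (hK : 0 ≤ K) (L : ℕ → ℝ) :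
    (0 : ℝ) ∈ {v : ℝ | ∃ c : ℕ → ℝ, Dmem N K c ∧ v = Vmin N κ L c} :=
  ⟨fun _ => 0, dmem_zero hK, (vmin_zero hκN L).symm⟩

lemma vset_bdd {N κ : ℕ} {L : ℕ → ℝ} (hLmono : ∀ i j : ℕ, 1 ≤ i → i ≤ j → j ≤ N → L i ≤ L j)
    (hLN : 0 ≤ L N) (hκN : κ ≤ N) (K : ℝ) :
    BddAbove {v : ℝ | ∃ c : ℕ → ℝ, Dmem N K c ∧ v = Vmin N κ L c} := by
  refine ⟨L N * K, ?_⟩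
  rintro v ⟨c, hc, rfl⟩
  exact vmin_le_bound hLmono hLN hκN hc

lemma vval_le {N κ : ℕ} {L : ℕ → ℝ} (hLmono : ∀ i j : ℕ, 1 ≤ i → i ≤ j → j ≤ N → L i ≤ L j)
    (hLN : 0 ≤ L N) (hκN : κ ≤ N) {K : ℝ} (hK : 0 ≤ K) :
    Vval N κ K L ≤ L N * K := by
  apply csSup_le ⟨0, zero_mem_vset hκN hK L⟩
  rintro v ⟨c, hc, rfl⟩
  exact vmin_le_bound hLmono hLN hκN hc

lemma vval_nonneg {N κ : ℕ} {L : ℕ → ℝ} (hLmono : ∀ i j : ℕ, 1 ≤ i → i ≤ j → j ≤ N → L i ≤ L j)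
    (hLN : 0 ≤ L N) (hκN : κ ≤ N) {K : ℝ} (hK : 0 ≤ K) : 0 ≤ Vval N κ K L :=
  le_csSup (vset_bdd hLmono hLN hκN K) (zero_mem_vset hκN hK L)

lemma vval_mono {N κ : ℕ} {L : ℕ → ℝ} (hLmono : ∀ i j : ℕ, 1 ≤ i → i ≤ j → j ≤ N → L i ≤ L j)
    (hLN : 0 ≤ L N) (hκN : κ ≤ N) {K K' : ℝ} (hK : 0 ≤ K) (hKK' : K ≤ K') :
    Vval N κ K L ≤ Vval N κ K' L := by
  apply csSup_le_csSup (vset_bdd hLmono hLN hκN K') ⟨0, zero_mem_vset hκN hK L⟩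
  rintro v ⟨c, hc, rfl⟩
  exact ⟨c, ⟨hc.1, hc.2.trans hKK'⟩, rfl⟩

lemma vval_zero {N κ : ℕ} {L : ℕ → ℝ} (hLmono : ∀ i j : ℕ, 1 ≤ i → i ≤ j → j ≤ N → L i ≤ L j)
    (hLN : 0 ≤ L N) (hκN : κ ≤ N) : Vval N κ 0 L = 0 := by
  apply le_antisymm
  · apply csSup_le ⟨0, zero_mem_vset hκN le_rfl L⟩
    rintro v ⟨c, hc, rfl⟩
    have hz : ∀ i ∈ Finset.Icc 1 N, c i = 0 := by
      intro i hi
      have := (Finset.sum_eq_zero_iff_of_nonneg (fun j hj => (hc.1 j hj).1)).1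
        (le_antisymm hc.2 (Finset.sum_nonneg (fun j hj => (hc.1 j hj).1)))
      exact this i hi
    obtain ⟨U, hU, hcard, heq⟩ := vmin_mem hκN L c
    rw [heq]
    apply le_of_eq
    exact Finset.sum_eq_zero fun i hi => by rw [hz i (hU hi), zero_mul]
  · exact vval_nonneg hLmono hLN hκN le_rfl

lemma vval_scale {N κ : ℕ} {L : ℕ → ℝ} (hLmono : ∀ i j : ℕ, 1 ≤ i → i ≤ j → j ≤ N → L i ≤ L j)
    (hLN : 0 ≤ L N) (hκN : κ ≤ N) {K a : ℝ} (hK : 0 ≤ K) (ha : 0 ≤ a) (ha1 : a ≤ 1) :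
    a * Vval N κ K L ≤ Vval N κ (a * K) L := by
  rcases eq_or_lt_of_le ha with h0 | h0
  · rw [← h0, zero_mul, zero_mul]
    exact vval_nonneg hLmono hLN hκN le_rfl
  · rw [mul_comm, ← le_div_iff₀ h0]
    apply csSup_le ⟨0, zero_mem_vset hκN hK L⟩
    rintro v ⟨c, hc, rfl⟩
    rw [le_div_iff₀ h0, mul_comm]
    apply le_csSup (vset_bdd hLmono hLN hκN (a * K))
    refine ⟨fun i => a * c i, ⟨fun i hi => ⟨mul_nonneg ha (hc.1 i hi).1,
      mul_le_one₀ ha1 (hc.1 i hi).1 (hc.1 i hi).2⟩, ?_⟩, (vmin_smul hκN L c ha).symm⟩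
    rw [← Finset.mul_sum]
    exact mul_le_mul_of_nonneg_left hc.2 ha

lemma vval_cont {N κ : ℕ} {L : ℕ → ℝ} (hLmono : ∀ i j : ℕ, 1 ≤ i → i ≤ j → j ≤ N → L i ≤ L j)
    (hLN : 0 ≤ L N) (hκN : κ ≤ N) :
    ContinuousOn (fun t => Vval N κ t L) (Set.Ici (0 : ℝ)) := by
  have key : ∀ s t : ℝ, 0 ≤ s → s ≤ t →
      Vval N κ t L - Vval N κ s L ≤ L N * (t - s) := by
    intro s t hs hst
    rcases eq_or_lt_of_le (hs.trans hst) with h0 | h0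
    · have hs0 : s = 0 := le_antisymm (hst.trans h0.symm.le) hs
      rw [← h0, hs0]
      simp
    · have hscale := vval_scale hLmono hLN hκN (K := t) (a := s / t)
        (hs.trans hst) (div_nonneg hs h0.le) ((div_le_one h0).mpr hst)
      rw [div_mul_cancel₀ s h0.ne'] at hscale
      rw [div_mul_eq_mul_div, div_le_iff₀ h0] at hscale
      have h2 := vval_le hLmono hLN hκN (hs.trans hst)
      have h3 := vval_nonneg hLmono hLN hκN (K := t) (hs.trans hst)
      nlinarith [mul_nonneg (sub_nonneg.mpr hst) (sub_nonneg.mpr h2)]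
  have hlip : LipschitzOnWith (Real.toNNReal (L N)) (fun t => Vval N κ t L) (Set.Ici 0) := by
    rw [lipschitzOnWith_iff_dist_le_mul]
    intro x hx y hy
    rw [Real.coe_toNNReal _ hLN]
    have hgen : ∀ s t : ℝ, 0 ≤ s → s ≤ t →
        dist (Vval N κ t L) (Vval N κ s L) ≤ L N * dist t s := by
      intro s t hs hst
      rw [Real.dist_eq, Real.dist_eq, abs_of_nonneg (sub_nonneg.mpr hst),
        abs_of_nonneg (sub_nonneg.mpr (vval_mono hLmono hLN hκN hs hst))]
      exact key s t hs hst
    rcases le_total x y with h | h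
    · rw [dist_comm, dist_comm x y]
      exact hgen x y hx h
    · exact hgen y x hy h
  exact hlip.continuousOn

section Wlem
variable {N₁ N₂ κ₁ κ₂ : ℕ} {K r : ℝ} {L₁ L₂ : ℕ → ℝ}

lemma zero_mem_wset (hκ₁N : κ₁ ≤ N₁) (hκ₂N : κ₂ ≤ N₂) (hK : 0 ≤ K) :
    (0 : ℝ) ∈ {w : ℝ | ∃ c₁ c₂ : ℕ → ℝ,
      (∀ i ∈ Finset.Icc 1 N₁, 0 ≤ c₁ i ∧ c₁ i ≤ 1) ∧
      (∀ j ∈ Finset.Icc 1 N₂, 0 ≤ c₂ j ∧ c₂ j ≤ 1) ∧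
      (∑ i ∈ Finset.Icc 1 N₁, c₁ i) + (∑ j ∈ Finset.Icc 1 N₂, c₂ j) ≤ K ∧
      w = min (Vmin N₁ κ₁ L₁ c₁) (r * Vmin N₂ κ₂ L₂ c₂)} := by
  refine ⟨fun _ => 0, fun _ => 0, fun i _ => by norm_num, fun j _ => by norm_num,
    by simpa using hK, ?_⟩
  rw [vmin_zero hκ₁N L₁, vmin_zero hκ₂N L₂, mul_zero, min_self]

lemma wset_bdd (hL₁mono : ∀ i j : ℕ, 1 ≤ i → i ≤ j → j ≤ N₁ → L₁ i ≤ L₁ j)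
    (hL₁N : 0 ≤ L₁ N₁) (hκ₁N : κ₁ ≤ N₁) :
    BddAbove {w : ℝ | ∃ c₁ c₂ : ℕ → ℝ,
      (∀ i ∈ Finset.Icc 1 N₁, 0 ≤ c₁ i ∧ c₁ i ≤ 1) ∧
      (∀ j ∈ Finset.Icc 1 N₂, 0 ≤ c₂ j ∧ c₂ j ≤ 1) ∧
      (∑ i ∈ Finset.Icc 1 N₁, c₁ i) + (∑ j ∈ Finset.Icc 1 N₂, c₂ j) ≤ K ∧
      w = min (Vmin N₁ κ₁ L₁ c₁) (r * Vmin N₂ κ₂ L₂ c₂)} := by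
  refine ⟨L₁ N₁ * K, ?_⟩
  rintro w ⟨c₁, c₂, hb₁, hb₂, hsum, rfl⟩
  have hc₂nn : 0 ≤ ∑ j ∈ Finset.Icc 1 N₂, c₂ j := Finset.sum_nonneg fun j hj => (hb₂ j hj).1
  have hD : Dmem N₁ K c₁ := ⟨hb₁, by linarith⟩
  exact (min_le_left _ _).trans (vmin_le_bound hL₁mono hL₁N hκ₁N hD)

lemma part2 (hL₁mono : ∀ i j : ℕ, 1 ≤ i → i ≤ j → j ≤ N₁ → L₁ i ≤ L₁ j)
    (hL₁N : 0 ≤ L₁ N₁) (hκ₁N : κ₁ ≤ N₁) (hκ₂N : κ₂ ≤ N₂) (hK : 0 ≤ K) (hr : 0 < r) :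
    ∀ K₁ K₂ : ℝ, 0 ≤ K₁ → 0 ≤ K₂ → K₁ + K₂ ≤ K →
      Vval N₁ κ₁ K₁ L₁ = r * Vval N₂ κ₂ K₂ L₂ →
      Vval N₁ κ₁ K₁ L₁ ≤ Wval N₁ N₂ κ₁ κ₂ K r L₁ L₂ := by
  intro K₁ K₂ h1 h2 h12 heq
  apply le_of_forall_pos_le_add
  intro ε hε
  have hne₁ : Set.Nonempty {v : ℝ | ∃ c : ℕ → ℝ, Dmem N₁ K₁ c ∧ v = Vmin N₁ κ₁ L₁ c} :=
    ⟨0, zero_mem_vset hκ₁N h1 L₁⟩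
  have hne₂ : Set.Nonempty {v : ℝ | ∃ c : ℕ → ℝ, Dmem N₂ K₂ c ∧ v = Vmin N₂ κ₂ L₂ c} :=
    ⟨0, zero_mem_vset hκ₂N h2 L₂⟩
  obtain ⟨v₁, hv₁mem, hv₁⟩ := exists_lt_of_lt_csSup hne₁
    (show Vval N₁ κ₁ K₁ L₁ - ε < Vval N₁ κ₁ K₁ L₁ by linarith)
  obtain ⟨v₂, hv₂mem, hv₂⟩ := exists_lt_of_lt_csSup hne₂
    (show Vval N₂ κ₂ K₂ L₂ - ε / r < Vval N₂ κ₂ K₂ L₂ by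
      have := div_pos hε hr; linarith)
  obtain ⟨c₁, hc₁, rfl⟩ := hv₁mem
  obtain ⟨c₂, hc₂, rfl⟩ := hv₂mem
  have hmem : min (Vmin N₁ κ₁ L₁ c₁) (r * Vmin N₂ κ₂ L₂ c₂) ∈ {w : ℝ | ∃ c₁ c₂ : ℕ → ℝ,
      (∀ i ∈ Finset.Icc 1 N₁, 0 ≤ c₁ i ∧ c₁ i ≤ 1) ∧
      (∀ j ∈ Finset.Icc 1 N₂, 0 ≤ c₂ j ∧ c₂ j ≤ 1) ∧
      (∑ i ∈ Finset.Icc 1 N₁, c₁ i) + (∑ j ∈ Finset.Icc 1 N₂, c₂ j) ≤ K ∧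
      w = min (Vmin N₁ κ₁ L₁ c₁) (r * Vmin N₂ κ₂ L₂ c₂)} :=
    ⟨c₁, c₂, hc₁.1, hc₂.1, by linarith [hc₁.2, hc₂.2], rfl⟩
  have hWge : min (Vmin N₁ κ₁ L₁ c₁) (r * Vmin N₂ κ₂ L₂ c₂) ≤ Wval N₁ N₂ κ₁ κ₂ K r L₁ L₂ :=
    le_csSup (wset_bdd hL₁mono hL₁N hκ₁N) hmem
  have hrv₂ : Vval N₁ κ₁ K₁ L₁ - ε < r * Vmin N₂ κ₂ L₂ c₂ := by
    rw [heq]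
    have := mul_lt_mul_of_pos_left hv₂ hr
    rw [mul_sub, mul_div_cancel₀ _ hr.ne'] at this
    linarith
  rcases min_choice (Vmin N₁ κ₁ L₁ c₁) (r * Vmin N₂ κ₂ L₂ c₂) with hmin | hmin <;>
    rw [hmin] at hWge <;> linarith

lemma wle (hL₁mono : ∀ i j : ℕ, 1 ≤ i → i ≤ j → j ≤ N₁ → L₁ i ≤ L₁ j)
    (hL₂mono : ∀ i j : ℕ, 1 ≤ i → i ≤ j → j ≤ N₂ → L₂ i ≤ L₂ j)
    (hL₁N : 0 ≤ L₁ N₁) (hL₂N : 0 ≤ L₂ N₂) (hκ₁N : κ₁ ≤ N₁) (hκ₂N : κ₂ ≤ N₂)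
    (hK : 0 ≤ K) (hr : 0 < r) {s₀ : ℝ} (hs₀0 : 0 ≤ s₀) (hs₀K : s₀ ≤ K)
    (heq : Vval N₁ κ₁ s₀ L₁ = r * Vval N₂ κ₂ (K - s₀) L₂) :
    Wval N₁ N₂ κ₁ κ₂ K r L₁ L₂ ≤ Vval N₁ κ₁ s₀ L₁ := by
  apply csSup_le ⟨0, zero_mem_wset hκ₁N hκ₂N hK⟩
  rintro w ⟨c₁, c₂, hb₁, hb₂, hsum, rfl⟩
  set k₁ := ∑ i ∈ Finset.Icc 1 N₁, c₁ i with hk₁def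
  set k₂ := ∑ j ∈ Finset.Icc 1 N₂, c₂ j with hk₂def
  have hk₁0 : 0 ≤ k₁ := Finset.sum_nonneg fun i hi => (hb₁ i hi).1
  have hk₂0 : 0 ≤ k₂ := Finset.sum_nonneg fun j hj => (hb₂ j hj).1
  rcases le_total k₁ s₀ with h | h
  · calc min (Vmin N₁ κ₁ L₁ c₁) (r * Vmin N₂ κ₂ L₂ c₂) ≤ Vmin N₁ κ₁ L₁ c₁ := min_le_left _ _
    _ ≤ Vval N₁ κ₁ k₁ L₁ := le_csSup (vset_bdd hL₁mono hL₁N hκ₁N k₁) ⟨c₁, ⟨hb₁, le_rfl⟩, rfl⟩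
    _ ≤ Vval N₁ κ₁ s₀ L₁ := vval_mono hL₁mono hL₁N hκ₁N hk₁0 h
  · have hk₂ : k₂ ≤ K - s₀ := by linarith
    calc min (Vmin N₁ κ₁ L₁ c₁) (r * Vmin N₂ κ₂ L₂ c₂) ≤ r * Vmin N₂ κ₂ L₂ c₂ := min_le_right _ _
    _ ≤ r * Vval N₂ κ₂ (K - s₀) L₂ := by
        apply mul_le_mul_of_nonneg_left _ hr.le
        calc Vmin N₂ κ₂ L₂ c₂ ≤ Vval N₂ κ₂ k₂ L₂ :=
              le_csSup (vset_bdd hL₂mono hL₂N hκ₂N k₂) ⟨c₂, ⟨hb₂, le_rfl⟩, rfl⟩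
        _ ≤ Vval N₂ κ₂ (K - s₀) L₂ := vval_mono hL₂mono hL₂N hκ₂N hk₂0 hk₂
    _ = Vval N₁ κ₁ s₀ L₁ := heq.symm
end Wlem


/-- `W(κ₁,κ₂,K,L₁,L₂,r)` equals the value of the constrained maximization of
`V(κ₁,K₁,L₁)` over pairs `(K₁,K₂)` of nonnegative reals with `K₁+K₂ ≤ K` and
`V(κ₁,K₁,L₁) = r·V(κ₂,K₂,L₂)`; in particular the constrained problem is attained at some
`(K₁*,K₂*)` with `W = V(κ₁,K₁*,L₁) = r·V(κ₂,K₂*,L₂)`. -/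
theorem stmt_7 (N₁ N₂ : ℕ) (L₁ L₂ : ℕ → ℝ)
    (hL₁pos : ∀ i ∈ Finset.Icc 1 N₁, 0 < L₁ i)
    (hL₁mono : ∀ i j : ℕ, 1 ≤ i → i ≤ j → j ≤ N₁ → L₁ i ≤ L₁ j)
    (hL₂pos : ∀ i ∈ Finset.Icc 1 N₂, 0 < L₂ i)
    (hL₂mono : ∀ i j : ℕ, 1 ≤ i → i ≤ j → j ≤ N₂ → L₂ i ≤ L₂ j)
    (κ₁ κ₂ : ℕ) (hκ₁1 : 1 ≤ κ₁) (hκ₁N : κ₁ ≤ N₁) (hκ₂1 : 1 ≤ κ₂) (hκ₂N : κ₂ ≤ N₂)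
    (K r : ℝ) (hK : 0 < K) (hr : 0 < r) :
    (∃ K₁ K₂ : ℝ, 0 ≤ K₁ ∧ 0 ≤ K₂ ∧ K₁ + K₂ ≤ K ∧
      Wval N₁ N₂ κ₁ κ₂ K r L₁ L₂ = Vval N₁ κ₁ K₁ L₁ ∧
      Vval N₁ κ₁ K₁ L₁ = r * Vval N₂ κ₂ K₂ L₂) ∧
    (∀ K₁ K₂ : ℝ, 0 ≤ K₁ → 0 ≤ K₂ → K₁ + K₂ ≤ K →
      Vval N₁ κ₁ K₁ L₁ = r * Vval N₂ κ₂ K₂ L₂ →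
      Vval N₁ κ₁ K₁ L₁ ≤ Wval N₁ N₂ κ₁ κ₂ K r L₁ L₂) := by
  have hN₁1 : 1 ≤ N₁ := hκ₁1.trans hκ₁N
  have hN₂1 : 1 ≤ N₂ := hκ₂1.trans hκ₂N
  have hL₁N : 0 ≤ L₁ N₁ := (hL₁pos N₁ (Finset.mem_Icc.mpr ⟨hN₁1, le_rfl⟩)).le
  have hL₂N : 0 ≤ L₂ N₂ := (hL₂pos N₂ (Finset.mem_Icc.mpr ⟨hN₂1, le_rfl⟩)).le
  -- IVT to find s₀
  set φ : ℝ → ℝ := fun s => Vval N₁ κ₁ s L₁ - r * Vval N₂ κ₂ (K - s) L₂ with hφ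
  have hcont : ContinuousOn φ (Set.Icc 0 K) := by
    apply ContinuousOn.sub
    · exact (vval_cont hL₁mono hL₁N hκ₁N).mono (fun x hx => hx.1)
    · apply ContinuousOn.mul continuousOn_const
      apply ContinuousOn.comp (vval_cont hL₂mono hL₂N hκ₂N)
        ((continuous_const.sub continuous_id).continuousOn)
      intro s hs
      simp only [Set.mem_Ici, id_eq, Pi.sub_apply]
      linarith [hs.2]
  have hφ0 : φ 0 ≤ 0 := by
    simp only [hφ, vval_zero hL₁mono hL₁N hκ₁N, sub_nonpos, zero_sub]
    have : 0 ≤ Vval N₂ κ₂ (K - 0) L₂ := vval_nonneg hL₂mono hL₂N hκ₂N (by linarith)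
    nlinarith
  have hφK : 0 ≤ φ K := by
    simp only [hφ, sub_self, vval_zero hL₂mono hL₂N hκ₂N, mul_zero, sub_zero]
    exact vval_nonneg hL₁mono hL₁N hκ₁N hK.le
  obtain ⟨s₀, hs₀mem, hs₀⟩ := intermediate_value_Icc hK.le hcont ⟨hφ0, hφK⟩
  have heqs : Vval N₁ κ₁ s₀ L₁ = r * Vval N₂ κ₂ (K - s₀) L₂ := by
    have h := hs₀
    simp only [hφ] at h
    linarith
  constructor
  · refine ⟨s₀, K - s₀, hs₀mem.1, by linarith [hs₀mem.2], by linarith, ?_, heqs⟩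
    apply le_antisymm
    · exact wle hL₁mono hL₂mono hL₁N hL₂N hκ₁N hκ₂N hK.le hr hs₀mem.1 hs₀mem.2 heqs
    · exact part2 hL₁mono hL₁N hκ₁N hκ₂N hK.le hr s₀ (K - s₀) hs₀mem.1
        (by linarith [hs₀mem.2]) (by linarith) heqs
  · exact part2 hL₁mono hL₁N hκ₁N hκ₂N hK.le hr
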